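/- For all n ∈ ℕ, ∫₀¹ xⁿ·( −log(1 − x/2) )/(2+x) dx = (−2)ⁿ·( Σ_{i=1}^{n} ((−1)ⁱ/i)·Σ_{j=1}^{i} 1/(2ʲ·j) + log(2)·( log(3) − Σ_{i=1}^{n} (−1)ⁱ/i + Σ_{i=1}^{n} 1/((−2)ⁱ·i) ) + π²/12 − (5/2)·log(2)² − Li₂(1/4) ), where Li₂(1/4) = Σ_{k=1}^{∞} (1/4)ᵏ/k². -/

import Mathlib

open MeasureTheory Real Filter Topology

noncomputable def L (x : ℝ) : ℝ := ∑' k : ℕ, x ^ (k + 1) / ((k : ℝ) + 1) ^ 2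

lemma summable_sq : Summable (fun k : ℕ => 1 / ((k : ℝ) + 1) ^ 2) := by
  have := Real.summable_one_div_nat_pow.mpr (by norm_num : 1 < 2)
  simpa using (summable_nat_add_iff 1).mpr this

lemma summable_L {x : ℝ} (hx : |x| ≤ 1) :
    Summable (fun k : ℕ => x ^ (k + 1) / ((k : ℝ) + 1) ^ 2) := by
  refine Summable.of_norm_bounded summable_sq (fun k => ?_)
  have h1 : (0:ℝ) < ((k : ℝ) + 1) ^ 2 := by positivity
  rw [norm_div, norm_pow, Real.norm_eq_abs, Real.norm_eq_abs, abs_of_pos h1]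
  gcongr
  exact pow_le_one₀ (abs_nonneg x) hx

lemma hasDerivAt_L {x : ℝ} (hx : |x| < 1) (hx0 : x ≠ 0) :
    HasDerivAt L (-Real.log (1 - x) / x) x := by
  set r : ℝ := (1 + |x|) / 2 with hr
  have hr0 : 0 ≤ r := by positivity
  have hr1 : r < 1 := by rw [hr]; linarith
  have hxr : |x| < r := by rw [hr]; linarith [abs_nonneg x]
  have hxmem : x ∈ Set.Ioo (-r) r := by
    constructor
    · linarith [(abs_lt.mp hxr).1]
    · exact (abs_lt.mp hxr).2
  have hsum : Summable (fun n : ℕ => r ^ n) := summable_geometric_of_lt_one hr0 hr1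
  have key : HasDerivAt (fun z : ℝ => ∑' n : ℕ, z ^ (n + 1) / ((n : ℝ) + 1) ^ 2)
      (∑' n : ℕ, x ^ n / ((n : ℝ) + 1)) x := by
    refine hasDerivAt_tsum_of_isPreconnected (u := fun n : ℕ => r ^ n)
      (g := fun (n : ℕ) (y : ℝ) => y ^ (n + 1) / ((n : ℝ) + 1) ^ 2)
      (g' := fun (n : ℕ) (y : ℝ) => y ^ n / ((n : ℝ) + 1))
      hsum (isOpen_Ioo (a := -r) (b := r)) ((convex_Ioo _ _).isPreconnected)
      (fun n y _ => ?_) (fun n y hy => ?_) (y₀ := 0) ?_ ?_ hxmem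
    · have h := (hasDerivAt_pow (n + 1) y).div_const (((n : ℝ) + 1) ^ 2)
      refine h.congr_deriv ?_
      push_cast
      field_simp
    · have hyr : |y| ≤ r := le_of_lt (abs_lt.mpr ⟨by linarith [hy.1], hy.2⟩)
      rw [Real.norm_eq_abs, abs_div, abs_pow]
      have hn1 : (1:ℝ) ≤ |(n : ℝ) + 1| := by
        rw [abs_of_pos (by positivity)]; linarith [Nat.cast_nonneg (α := ℝ) n]
      calc |y| ^ n / |(n : ℝ) + 1| ≤ |y| ^ n := div_le_self (by positivity) hn1
        _ ≤ r ^ n := pow_le_pow_left₀ (abs_nonneg y) hyr n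
    · have hr0' : (0:ℝ) < r := by rw [hr]; positivity
      exact ⟨by linarith, hr0'⟩
    · refine Summable.of_norm_bounded summable_sq (fun k => ?_)
      simp
      positivity
  have hL : L = fun z : ℝ => ∑' n : ℕ, z ^ (n + 1) / ((n : ℝ) + 1) ^ 2 := rfl
  rw [hL]
  convert key using 1
  have hlog := hasSum_pow_div_log_of_abs_lt_one hx
  have h2 : HasSum (fun n : ℕ => x * (x ^ n / ((n : ℝ) + 1))) (-Real.log (1 - x)) := by
    convert hlog using 2 with n
    push_cast; ring
  have ht := h2.tsum_eq
  rw [tsum_mul_left] at ht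
  field_simp
  rw [mul_comm] at ht
  linarith [ht]

lemma hasSum_shift : HasSum (fun k : ℕ => 1 / ((k : ℝ) + 1) ^ 2) (π ^ 2 / 6) := by
  have h := hasSum_zeta_two
  have h2 := (hasSum_nat_add_iff' (f := fun n : ℕ => (1 : ℝ) / (n : ℝ) ^ 2) 1).mpr h
  simpa using h2

lemma tsum_sq : (∑' k : ℕ, 1 / ((k : ℝ) + 1) ^ 2) = π ^ 2 / 6 := hasSum_shift.tsum_eq

lemma L_tendsto_one : Tendsto L (𝓝[<] (1:ℝ)) (𝓝 (π ^ 2 / 6)) := by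
  rw [← tsum_sq]
  apply tendsto_tsum_of_dominated_convergence (bound := fun k : ℕ => 1 / ((k : ℝ) + 1) ^ 2)
    summable_sq
  · intro k
    have : Tendsto (fun x : ℝ => x ^ (k + 1) / ((k : ℝ) + 1) ^ 2) (𝓝 1) (𝓝 (1 / ((k : ℝ) + 1) ^ 2)) := by
      have := ((continuous_pow (k + 1)).tendsto (1:ℝ)).div_const (((k : ℝ) + 1) ^ 2)
      simpa using this
    exact this.mono_left nhdsWithin_le_nhds
  · filter_upwards [Ioo_mem_nhdsLT_of_mem (by norm_num : (1:ℝ) ∈ Set.Ioc 0 1)] with x hx k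
    have h1 : (0:ℝ) < ((k : ℝ) + 1) ^ 2 := by positivity
    rw [Real.norm_eq_abs, abs_div, abs_pow, abs_of_pos h1]
    gcongr
    exact pow_le_one₀ (abs_nonneg x) (by rw [abs_of_pos hx.1]; exact hx.2.le)

lemma L_tendsto_zero : Tendsto L (𝓝[>] (0:ℝ)) (𝓝 0) := by
  apply squeeze_zero' (f := L) (g := fun x => 2 * x)
  · filter_upwards [Ioo_mem_nhdsGT_of_mem (by norm_num : (0:ℝ) ∈ Set.Ico 0 (1/2))] with x hx
    exact tsum_nonneg fun k => div_nonneg (pow_nonneg hx.1.le _) (by positivity)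
  · filter_upwards [Ioo_mem_nhdsGT_of_mem (by norm_num : (0:ℝ) ∈ Set.Ico 0 (1/2))] with x hx
    have hx0 : 0 < x := hx.1
    have hx2 : x < 1/2 := hx.2
    have hgeom : Summable (fun k : ℕ => x ^ (k + 1)) := by
      have := (summable_geometric_of_lt_one hx0.le (by linarith : x < 1)).mul_left x
      exact this.congr fun k => by ring
    have hle : L x ≤ ∑' k : ℕ, x ^ (k + 1) := by
      apply Summable.tsum_le_tsum _ (summable_L (by rw [abs_of_pos hx0]; linarith)) hgeom
      intro k
      have h1 : (1:ℝ) ≤ ((k : ℝ) + 1) ^ 2 := by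
        have : (1:ℝ) ≤ (k : ℝ) + 1 := by linarith [Nat.cast_nonneg (α := ℝ) k]
        nlinarith
      calc x ^ (k + 1) / ((k : ℝ) + 1) ^ 2 ≤ x ^ (k + 1) / 1 := by
            gcongr
        _ = x ^ (k + 1) := div_one _
    have hsum : (∑' k : ℕ, x ^ (k + 1)) = x / (1 - x) := by
      have := tsum_geometric_of_lt_one hx0.le (by linarith : x < 1)
      calc (∑' k : ℕ, x ^ (k + 1)) = ∑' k : ℕ, x * x ^ k := by
            congr 1; ext k; rw [pow_succ, mul_comm]
        _ = x * ∑' k : ℕ, x ^ k := tsum_mul_left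
        _ = x * (1 - x)⁻¹ := by rw [this]
        _ = x / (1 - x) := by rw [div_eq_mul_inv]
    have : x / (1 - x) ≤ 2 * x := by
      rw [div_le_iff₀ (by linarith)]
      nlinarith
    linarith [hle, hsum ▸ hle]
  · have : Tendsto (fun x : ℝ => 2 * x) (𝓝 0) (𝓝 0) := by
      simpa using (continuous_mul_left (2:ℝ)).tendsto (0:ℝ)
    exact this.mono_left nhdsWithin_le_nhds

noncomputable def G (x : ℝ) : ℝ := L x + L (1 - x) + Real.log x * Real.log (1 - x)

lemma hasDerivAt_G {x : ℝ} (hx0 : 0 < x) (hx1 : x < 1) : HasDerivAt G 0 x := by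
  have hx0' : x ≠ 0 := ne_of_gt hx0
  have h1x0 : 0 < 1 - x := by linarith
  have h1x0' : (1:ℝ) - x ≠ 0 := ne_of_gt h1x0
  have hL1 : HasDerivAt L (-Real.log (1 - x) / x) x :=
    hasDerivAt_L (by rw [abs_of_pos hx0]; exact hx1) hx0'
  have hL2' : HasDerivAt L (-Real.log (1 - (1 - x)) / (1 - x)) (1 - x) :=
    hasDerivAt_L (by rw [abs_of_pos h1x0]; linarith) h1x0'
  have hsub : HasDerivAt (fun y : ℝ => 1 - y) (-1) x := by
    simpa using (hasDerivAt_id x).const_sub 1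
  have hL2 : HasDerivAt (fun y => L (1 - y)) ((-Real.log (1 - (1 - x)) / (1 - x)) * (-1)) x :=
    HasDerivAt.comp x hL2' hsub
  have hlogx : HasDerivAt Real.log x⁻¹ x := Real.hasDerivAt_log hx0'
  have hlog1x : HasDerivAt (fun y : ℝ => Real.log (1 - y)) ((1 - x)⁻¹ * (-1)) x :=
    HasDerivAt.comp x (Real.hasDerivAt_log h1x0') hsub
  have hprod : HasDerivAt (fun y : ℝ => Real.log y * Real.log (1 - y))
      (x⁻¹ * Real.log (1 - x) + Real.log x * ((1 - x)⁻¹ * (-1))) x := hlogx.mul hlog1x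
  have := (hL1.add hL2).add hprod
  refine this.congr_deriv ?_
  have hs : (1:ℝ) - (1 - x) = x := by ring
  rw [hs]
  field_simp
  ring

lemma G_const {a : ℝ} (ha : 0 < a) (ha2 : a ≤ 1/2) : G a = G (1/2) := by
  have key : ∫ x in a..(1/2:ℝ), (0:ℝ) = G (1/2) - G a := by
    apply intervalIntegral.integral_eq_sub_of_hasDerivAt
    · intro x hx
      rw [Set.uIcc_of_le (by linarith)] at hx
      exact hasDerivAt_G (lt_of_lt_of_le ha hx.1) (lt_of_le_of_lt hx.2 (by norm_num))
    · exact intervalIntegrable_const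
  simp at key
  linarith

lemma log_mul_log_tendsto : Tendsto (fun a : ℝ => Real.log a * Real.log (1 - a)) (𝓝[>] (0:ℝ)) (𝓝 0) := by
  have hb : ∀ᶠ a in 𝓝[>] (0:ℝ), ‖Real.log a * Real.log (1 - a)‖ ≤ 2 * ‖a * Real.log a‖ := by
    filter_upwards [Ioo_mem_nhdsGT_of_mem (by norm_num : (0:ℝ) ∈ Set.Ico 0 (1/2))] with a ha
    have ha0 : 0 < a := ha.1
    have ha2 : a < 1/2 := ha.2
    have h1a : 0 < 1 - a := by linarith
    have hlog_a_nonpos : Real.log a ≤ 0 := Real.log_nonpos ha0.le (by linarith)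
    have hlog_1a_nonpos : Real.log (1 - a) ≤ 0 := Real.log_nonpos h1a.le (by linarith)
    have hbound : -Real.log (1 - a) ≤ 2 * a := by
      have h := Real.log_le_sub_one_of_pos (show (0:ℝ) < (1 - a)⁻¹ by positivity)
      rw [Real.log_inv] at h
      have he : (1 - a)⁻¹ - 1 = a / (1 - a) := by field_simp; ring
      rw [he] at h
      have : a / (1 - a) ≤ 2 * a := by
        rw [div_le_iff₀ h1a]; nlinarith
      linarith
    have e1 : ‖Real.log a * Real.log (1 - a)‖ = -Real.log a * -Real.log (1 - a) := by
      rw [Real.norm_eq_abs, abs_mul, abs_of_nonpos hlog_a_nonpos, abs_of_nonpos hlog_1a_nonpos]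
    have e2 : ‖a * Real.log a‖ = a * -Real.log a := by
      rw [Real.norm_eq_abs, abs_mul, abs_of_pos ha0, abs_of_nonpos hlog_a_nonpos]
    rw [e1, e2]
    nlinarith [hbound, hlog_a_nonpos]
  refine squeeze_zero_norm' hb ?_
  · have h : Tendsto (fun a : ℝ => a * Real.log a) (𝓝 0) (𝓝 0) := by
      have := continuous_mul_log.tendsto (0:ℝ)
      simpa using this
    have h2 : Tendsto (fun a : ℝ => 2 * ‖a * Real.log a‖) (𝓝 0) (𝓝 (2 * ‖(0:ℝ)‖)) :=
      (h.norm.const_mul 2)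
    simp only [norm_zero, mul_zero] at h2
    exact h2.mono_left nhdsWithin_le_nhds

lemma L_half : L (1/2) = π ^ 2 / 12 - Real.log 2 ^ 2 / 2 := by
  have hGlim : Tendsto G (𝓝[>] (0:ℝ)) (𝓝 (π ^ 2 / 6)) := by
    have h1 : Tendsto (fun a : ℝ => L (1 - a)) (𝓝[>] (0:ℝ)) (𝓝 (π ^ 2 / 6)) := by
      apply L_tendsto_one.comp
      have hmap : Tendsto (fun a : ℝ => 1 - a) (𝓝[>] (0:ℝ)) (𝓝[<] (1:ℝ)) := by
        apply tendsto_nhdsWithin_of_tendsto_nhds_of_eventually_within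
        · have : Tendsto (fun a : ℝ => 1 - a) (𝓝 0) (𝓝 1) := by
            have hc : Continuous fun a : ℝ => 1 - a := continuous_const.sub continuous_id
            have := hc.tendsto 0
            simpa using this
          exact this.mono_left nhdsWithin_le_nhds
        · filter_upwards [self_mem_nhdsWithin] with a ha
          simp only [Set.mem_Iio]
          linarith [Set.mem_Ioi.mp ha]
      exact hmap
    have := (L_tendsto_zero.add h1).add log_mul_log_tendsto
    rw [zero_add, add_zero] at this; exact this
  have hGconst : Tendsto G (𝓝[>] (0:ℝ)) (𝓝 (G (1/2))) := by
    apply Tendsto.congr' _ tendsto_const_nhds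
    filter_upwards [Ioo_mem_nhdsGT_of_mem (by norm_num : (0:ℝ) ∈ Set.Ico 0 (1/2))] with a ha
    exact (G_const ha.1 ha.2.le).symm
  have huniq : G (1/2) = π ^ 2 / 6 := tendsto_nhds_unique hGconst hGlim
  have hG : G (1/2) = 2 * L (1/2) + Real.log 2 ^ 2 := by
    unfold G
    norm_num
    rw [show Real.log (1/2 : ℝ) = -Real.log 2 by rw [one_div, Real.log_inv]]
    ring
  rw [hG] at huniq
  linarith

lemma cont_log_factor : ContinuousOn (fun x : ℝ => -Real.log (1 - x / 2)) (Set.uIcc 0 1) := by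
  rw [Set.uIcc_of_le (by norm_num : (0:ℝ) ≤ 1)]
  apply ContinuousOn.neg
  apply ContinuousOn.log
  · exact (continuous_const.sub (continuous_id.div_const 2)).continuousOn
  · intro x hx
    have := hx.1; have := hx.2
    simp only [Set.mem_Icc] at hx
    intro h; nlinarith [hx.1, hx.2]

lemma integrable_main (n : ℕ) :
    IntervalIntegrable (fun x : ℝ => x ^ n * (-Real.log (1 - x / 2)) / (2 + x)) volume 0 1 := by
  apply ContinuousOn.intervalIntegrable
  apply ContinuousOn.div
  · exact ((continuous_pow n).continuousOn).mul cont_log_factor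
  · exact (continuous_const.add continuous_id).continuousOn
  · intro x hx
    rw [Set.uIcc_of_le (by norm_num : (0:ℝ) ≤ 1)] at hx
    simp only [Set.mem_Icc] at hx
    intro h; nlinarith [hx.1]

lemma integrable_J (n : ℕ) :
    IntervalIntegrable (fun x : ℝ => x ^ n * (-Real.log (1 - x / 2))) volume 0 1 :=
  ContinuousOn.intervalIntegrable (((continuous_pow n).continuousOn).mul cont_log_factor)

lemma base_case :
    ∫ x in (0:ℝ)..1, -Real.log (1 - x / 2) / (2 + x) =
      Real.log 2 * Real.log 3 + π ^ 2 / 12 - (5 / 2) * Real.log 2 ^ 2 - L (1/4) := by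
  have hderiv : ∀ x ∈ Set.uIcc (0:ℝ) 1,
      HasDerivAt (fun y : ℝ => -Real.log (1 - y / 2) * Real.log ((2 + y) / 4) - L ((2 - y) / 4))
        (-Real.log (1 - x / 2) / (2 + x)) x := by
    intro x hx
    rw [Set.uIcc_of_le (by norm_num : (0:ℝ) ≤ 1), Set.mem_Icc] at hx
    obtain ⟨hx0, hx1⟩ := hx
    have h2x : (0:ℝ) < 2 - x := by linarith
    have h2x' : (0:ℝ) < 2 + x := by linarith
    have h1x2 : (0:ℝ) < 1 - x / 2 := by linarith
    -- derivative of -log(1 - y/2)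
    have hin : HasDerivAt (fun y : ℝ => 1 - y / 2) (-(1/2)) x := by
      simpa using ((hasDerivAt_id x).div_const 2).const_sub 1
    have hu : HasDerivAt (fun y : ℝ => -Real.log (1 - y / 2)) (1 / (2 - x)) x := by
      have := (Real.hasDerivAt_log (ne_of_gt h1x2)).comp x hin
      have h2 := this.neg
      refine h2.congr_deriv ?_
      field_simp
    -- derivative of log((2+y)/4)
    have hin2 : HasDerivAt (fun y : ℝ => (2 + y) / 4) (1/4) x := by
      simpa using ((hasDerivAt_id x).const_add 2).div_const 4
    have hv : HasDerivAt (fun y : ℝ => Real.log ((2 + y) / 4)) (1 / (2 + x)) x := by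
      have := (Real.hasDerivAt_log (by positivity : (2 + x)/4 ≠ 0)).comp x hin2
      refine this.congr_deriv ?_
      field_simp
    -- derivative of L((2-y)/4)
    have hin3 : HasDerivAt (fun y : ℝ => (2 - y) / 4) (-(1/4)) x := by
      have h := ((hasDerivAt_id x).const_sub 2).div_const 4
      refine h.congr_deriv ?_; norm_num
    have hyval : |(2 - x) / 4| < 1 := by
      rw [abs_of_pos (by positivity)]; linarith
    have hw : HasDerivAt (fun y : ℝ => L ((2 - y) / 4)) (Real.log ((2 + x) / 4) / (2 - x)) x := by
      have hL := (hasDerivAt_L hyval (by positivity)).comp x hin3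
      refine hL.congr_deriv ?_
      have : (1:ℝ) - (2 - x) / 4 = (2 + x) / 4 := by ring
      rw [this]
      field_simp
    have := (hu.mul hv).sub hw
    refine this.congr_deriv ?_
    field_simp
    ring
  have := intervalIntegral.integral_eq_sub_of_hasDerivAt hderiv
    (by simpa using integrable_main 0)
  rw [this]
  have e1 : (1:ℝ) - 1 / 2 = 1/2 := by norm_num
  have e2 : ((2:ℝ) + 1) / 4 = 3/4 := by norm_num
  have e3 : ((2:ℝ) - 1) / 4 = 1/4 := by norm_num
  have e4 : (1:ℝ) - 0 / 2 = 1 := by norm_num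
  have e5 : ((2:ℝ) - 0) / 4 = 1/2 := by norm_num
  rw [e1, e2, e3, e4, e5, Real.log_one]
  have l1 : Real.log (1/2 : ℝ) = -Real.log 2 := by rw [one_div, Real.log_inv]
  have l2 : Real.log (3/4 : ℝ) = Real.log 3 - 2 * Real.log 2 := by
    rw [Real.log_div (by norm_num) (by norm_num)]
    rw [show (4:ℝ) = 2^2 by norm_num, Real.log_pow]
    push_cast; ring
  rw [l1, l2, L_half]
  ring

lemma geom_identity (m : ℕ) (x : ℝ) :
    (2:ℝ) ^ (m + 1) - x ^ (m + 1) = (2 - x) * ∑ j ∈ Finset.range (m + 1), 2 ^ (m - j) * x ^ j := by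
  have h := geom_sum₂_mul (R := ℝ) (x := 2) (y := x) (n := m + 1)
  have hrefl : ∑ j ∈ Finset.range (m + 1), (2:ℝ) ^ (m - j) * x ^ j
      = ∑ i ∈ Finset.range (m + 1), (2:ℝ) ^ i * x ^ (m - i) := by
    rw [← Finset.sum_range_reflect]
    apply Finset.sum_congr rfl
    intro j hj
    rw [Finset.mem_range] at hj
    have : m + 1 - 1 - j = m - j := by omega
    rw [this]
    congr 1
    congr 1
    omega
  rw [hrefl]
  have : ∀ i ∈ Finset.range (m + 1), (2:ℝ) ^ i * x ^ (m - i) = 2 ^ i * x ^ (m + 1 - 1 - i) := by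
    intro i hi; rfl
  rw [Finset.sum_congr rfl this]
  rw [← h]
  ring

lemma J_eval (m : ℕ) :
    ∫ x in (0:ℝ)..1, x ^ m * (-Real.log (1 - x / 2)) =
      (1 - 2 ^ (m + 1) : ℝ) * Real.log 2 / (m + 1) +
        (2 ^ (m + 1) / (m + 1)) * ∑ j ∈ Finset.Icc 1 (m + 1), 1 / (2 ^ j * (j : ℝ)) := by
  have hm1 : ((m : ℝ) + 1) ≠ 0 := by positivity
  set H : ℝ → ℝ := fun x =>
    (2 ^ (m + 1) - x ^ (m + 1)) / (m + 1) * Real.log (1 - x / 2) +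
      (∑ j ∈ Finset.range (m + 1), 2 ^ (m - j) * x ^ (j + 1) / (j + 1)) / (m + 1) with hH
  have hderiv : ∀ x ∈ Set.uIcc (0:ℝ) 1, HasDerivAt H (x ^ m * (-Real.log (1 - x / 2))) x := by
    intro x hx
    rw [Set.uIcc_of_le (by norm_num : (0:ℝ) ≤ 1), Set.mem_Icc] at hx
    obtain ⟨hx0, hx1⟩ := hx
    have h1x2 : (0:ℝ) < 1 - x / 2 := by linarith
    have h2x : (0:ℝ) < 2 - x := by linarith
    have hin : HasDerivAt (fun y : ℝ => 1 - y / 2) (-(1/2)) x := by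
      simpa using ((hasDerivAt_id x).div_const 2).const_sub 1
    have hlog : HasDerivAt (fun y : ℝ => Real.log (1 - y / 2)) (-(1 / (2 - x))) x := by
      have := (Real.hasDerivAt_log (ne_of_gt h1x2)).comp x hin
      refine this.congr_deriv ?_
      field_simp
    have hpoly : HasDerivAt (fun y : ℝ => (2 ^ (m + 1) - y ^ (m + 1)) / ((m:ℝ) + 1))
        (-((m + 1 : ℝ) * x ^ m) / ((m:ℝ) + 1)) x := by
      have := ((hasDerivAt_pow (m + 1) x).const_sub (2 ^ (m + 1))).div_const ((m:ℝ) + 1)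
      refine this.congr_deriv ?_
      push_cast; ring
    have hsum : HasDerivAt (fun y : ℝ => (∑ j ∈ Finset.range (m + 1), 2 ^ (m - j) * y ^ (j + 1) / (j + 1)) / ((m:ℝ) + 1))
        ((∑ j ∈ Finset.range (m + 1), 2 ^ (m - j) * x ^ j) / ((m:ℝ) + 1)) x := by
      apply HasDerivAt.div_const
      apply HasDerivAt.fun_sum
      intro j _
      have := ((hasDerivAt_pow (j + 1) x).const_mul ((2:ℝ) ^ (m - j))).div_const ((j:ℝ) + 1)
      refine this.congr_deriv ?_
      have hj1 : ((j:ℝ) + 1) ≠ 0 := by positivity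
      push_cast
      field_simp
    have htot := (hpoly.mul hlog).add hsum
    rw [hH]
    refine htot.congr_deriv ?_
    have hg := geom_identity m x
    have hgdiv : (∑ j ∈ Finset.range (m + 1), (2:ℝ) ^ (m - j) * x ^ j)
        = (2 ^ (m + 1) - x ^ (m + 1)) / (2 - x) := by
      rw [hg]; field_simp
    rw [hgdiv]
    field_simp
    ring
  have hint := intervalIntegral.integral_eq_sub_of_hasDerivAt hderiv (integrable_J m)
  have hsum_eq : (∑ j ∈ Finset.range (m + 1), (2:ℝ) ^ (m - j) * 1 ^ (j + 1) / (j + 1))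
      = 2 ^ (m + 1) * ∑ j ∈ Finset.Icc 1 (m + 1), 1 / (2 ^ j * (j : ℝ)) := by
    rw [← Finset.Ico_add_one_right_eq_Icc, Finset.sum_Ico_eq_sum_range]
    have hcard : m + 1 + 1 - 1 = m + 1 := by omega
    rw [hcard, Finset.mul_sum]
    apply Finset.sum_congr rfl
    intro j hj
    rw [Finset.mem_range] at hj
    have hpow : (2:ℝ) ^ (m - j) = 2 ^ (m + 1) / 2 ^ (j + 1) := by
      rw [eq_div_iff (by positivity), ← pow_add]
      congr 1
      omega
    rw [hpow, one_pow]
    have h1 : ((1 + j : ℕ) : ℝ) = (j:ℝ) + 1 := by push_cast; ring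
    rw [h1]
    have hj1 : ((j:ℝ) + 1) ≠ 0 := by positivity
    have hp : ((2:ℝ) ^ (1 + j)) = 2 ^ (j + 1) := by rw [add_comm]
    rw [hp]
    field_simp
  have hH1 : H 1 = (2 ^ (m + 1) - 1 : ℝ) / ((m:ℝ) + 1) * (-Real.log 2) +
      (2 ^ (m + 1) * ∑ j ∈ Finset.Icc 1 (m + 1), 1 / (2 ^ j * (j : ℝ))) / ((m:ℝ) + 1) := by
    rw [hH]
    simp only []
    rw [hsum_eq]
    norm_num
    rw [one_div, Real.log_inv]
    ring
  have hH0 : H 0 = 0 := by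
    rw [hH]
    simp only []
    have hz : ∀ j ∈ Finset.range (m + 1), (2:ℝ) ^ (m - j) * (0:ℝ) ^ (j + 1) / ((j:ℝ) + 1) = 0 := by
      intro j _
      rw [zero_pow (Nat.succ_ne_zero j)]
      ring
    rw [Finset.sum_congr rfl hz, Finset.sum_const_zero]
    norm_num
  rw [hint, hH1, hH0]
  field_simp
  ring

theorem mellin_neg_log_div (n : ℕ) :
    ∫ x in (0:ℝ)..1, x ^ n * (-Real.log (1 - x / 2)) / (2 + x) =
      (-2 : ℝ) ^ n *
        ((∑ i ∈ Finset.Icc 1 n,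
            ((-1 : ℝ) ^ i / i) * ∑ j ∈ Finset.Icc 1 i, 1 / (2 ^ j * (j : ℝ))) +
          Real.log 2 *
            (Real.log 3 - (∑ i ∈ Finset.Icc 1 n, (-1 : ℝ) ^ i / i) +
              ∑ i ∈ Finset.Icc 1 n, 1 / ((-2 : ℝ) ^ i * i)) +
          π ^ 2 / 12 - (5 / 2) * Real.log 2 ^ 2 -
          ∑' k : ℕ, (1 / 4 : ℝ) ^ (k + 1) / ((k : ℝ) + 1) ^ 2) := by
  have htsum : (∑' k : ℕ, (1 / 4 : ℝ) ^ (k + 1) / ((k : ℝ) + 1) ^ 2) = L (1/4) := rfl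
  induction n with
  | zero =>
    rw [htsum]
    have hIcc : Finset.Icc 1 0 = (∅ : Finset ℕ) := rfl
    simp only [pow_zero, hIcc, Finset.sum_empty, one_mul, sub_zero, add_zero]
    rw [base_case]
    ring
  | succ n ih =>
    have hsplit : ∀ x ∈ Set.uIcc (0:ℝ) 1,
        x ^ (n + 1) * (-Real.log (1 - x / 2)) / (2 + x) =
          x ^ n * (-Real.log (1 - x / 2)) - 2 * (x ^ n * (-Real.log (1 - x / 2)) / (2 + x)) := by
      intro x hx
      rw [Set.uIcc_of_le (by norm_num : (0:ℝ) ≤ 1), Set.mem_Icc] at hx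
      have h2x : (2:ℝ) + x ≠ 0 := by intro h; nlinarith [hx.1]
      field_simp
      ring
    rw [intervalIntegral.integral_congr hsplit,
      intervalIntegral.integral_sub (integrable_J n) ((integrable_main n).const_mul 2),
      intervalIntegral.integral_const_mul, ih, J_eval n]
    rw [Finset.sum_Icc_succ_top (by omega : 1 ≤ n + 1)
        (fun i : ℕ => ((-1:ℝ) ^ i / i) * ∑ j ∈ Finset.Icc 1 i, 1 / (2 ^ j * (j:ℝ))),
      Finset.sum_Icc_succ_top (by omega : 1 ≤ n + 1) (fun i : ℕ => ((-1:ℝ) ^ i / (i:ℝ))),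
      Finset.sum_Icc_succ_top (by omega : 1 ≤ n + 1) (fun i : ℕ => 1 / ((-2:ℝ) ^ i * (i:ℝ)))]
    rw [htsum]
    have hne : ((n:ℝ) + 1) ≠ 0 := by positivity
    have h2n : ((2:ℝ) ^ n) ≠ 0 := by positivity
    have hc : ((n + 1 : ℕ) : ℝ) = (n:ℝ) + 1 := by push_cast; ring
    rcases neg_one_pow_eq_or ℝ n with he | he
    · simp only [show ((-2:ℝ)) = (-1) * 2 from by norm_num, mul_pow, pow_succ, he, hc]
      field_simp
      ring
    · simp only [show ((-2:ℝ)) = (-1) * 2 from by norm_num, mul_pow, pow_succ, he, hc]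
      field_simp
      ring
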